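/- Let G be a graph on n vertices of tree-width at most w whose complement Ḡ is closed under the Bondy–Chvátal closure (for Hamiltonian paths). Then the neighborhood diversity of Ḡ is at most 2^k + k, where k = 2(w² + w). -/

import Mathlib

open SimpleGraph Finset


/-- A tree decomposition of a graph `G` on vertex type `V`, indexed by the vertices of a
tree `T` on index type `ι`: every vertex of `G` lies in some bag, both endpoints of every
edge of `G` lie in some common bag, and for every vertex `v` the set of tree nodes whose
bag contains `v` induces a (connected) subtree of `T`. -/
structure TreeDecomp {V ι : Type} (G : SimpleGraph V) (T : SimpleGraph ι) where
  isTree : T.IsTree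
  bag : ι → Finset V
  mem_bag : ∀ v : V, ∃ i : ι, v ∈ bag i
  edge_bag : ∀ u v : V, G.Adj u v → ∃ i : ι, u ∈ bag i ∧ v ∈ bag i
  subtree : ∀ v : V, (T.induce {i : ι | v ∈ bag i}).Connected



lemma aux_append_path {ι : Type} {T : SimpleGraph ι} {a b c : ι} {p : T.Walk a b}
    {q : T.Walk b c} (hp : p.IsPath) (hq : q.IsPath)
    (hdisj : ∀ x ∈ p.support, x ∈ q.support → x = b) : (p.append q).IsPath := by
  rw [SimpleGraph.Walk.isPath_def, SimpleGraph.Walk.support_append]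
  refine List.Nodup.append hp.support_nodup hq.support_nodup.tail ?_
  intro x hxp hxq
  have hxq' : x ∈ q.support := List.mem_of_mem_tail hxq
  rw [hdisj x hxp hxq'] at hxq
  have hnd := hq.support_nodup
  rw [q.support_eq_cons] at hnd
  exact (List.nodup_cons.mp hnd).1 hxq

lemma aux_walk_in_set {ι : Type} [DecidableEq ι] {T : SimpleGraph ι} {S : Set ι}
    (hS : (T.induce S).Connected) {a b : ι} (ha : a ∈ S) (hb : b ∈ S) :
    ∃ p : T.Walk a b, p.IsPath ∧ ∀ x ∈ p.support, x ∈ S := by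
  classical
  obtain ⟨q⟩ := hS ⟨a, ha⟩ ⟨b, hb⟩
  refine ⟨q.bypass.map (SimpleGraph.Embedding.induce S).toHom, ?_, ?_⟩
  · exact Walk.map_isPath_of_injective (SimpleGraph.Embedding.induce (G := T) S).injective
      q.bypass_isPath
  · intro x hx
    have hx' : x ∈ (q.bypass.map (SimpleGraph.Embedding.induce (G := T) S).toHom).support := hx
    rw [Walk.support_map] at hx'
    obtain ⟨y, _, rfl⟩ := List.mem_map.mp hx'
    exact y.2

lemma aux_shortest {ι : Type} [DecidableEq ι] {T : SimpleGraph ι} (hc : T.Connected)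
    (t r : ι) :
    ∃ q : T.Walk t r, q.IsPath ∧ ∀ x ∈ q.support,
      T.dist x r + T.dist t x = T.dist t r := by
  obtain ⟨q0, hq0⟩ := hc.exists_walk_length_eq_dist t r
  have hlen : q0.bypass.length = T.dist t r :=
    le_antisymm (hq0 ▸ q0.length_bypass_le) (SimpleGraph.dist_le _)
  refine ⟨q0.bypass, q0.bypass_isPath, ?_⟩
  intro x hx
  have hspec := q0.bypass.take_spec hx
  have h1 : T.dist t x ≤ (q0.bypass.takeUntil x hx).length := SimpleGraph.dist_le _
  have h2 : T.dist x r ≤ (q0.bypass.dropUntil x hx).length := SimpleGraph.dist_le _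
  have h3 : (q0.bypass.takeUntil x hx).length + (q0.bypass.dropUntil x hx).length
      = T.dist t r := by
    rw [← hlen, ← Walk.length_append, hspec]
  have h4 : T.dist t r ≤ T.dist t x + T.dist x r := hc.dist_triangle
  omega

lemma aux_key {ι : Type} [DecidableEq ι] {T : SimpleGraph ι} (hT : T.IsTree) (r : ι)
    {S₁ S₂ : Set ι} (h1 : (T.induce S₁).Connected) (h2 : (T.induce S₂).Connected)
    {i t1 t2 : ι} (hi1 : i ∈ S₁) (hi2 : i ∈ S₂) (ht1 : t1 ∈ S₁) (ht2 : t2 ∈ S₂)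
    (hmin1 : ∀ j ∈ S₁, T.dist t1 r ≤ T.dist j r)
    (hmin2 : ∀ j ∈ S₂, T.dist t2 r ≤ T.dist j r)
    (hle : T.dist t1 r ≤ T.dist t2 r) : t2 ∈ S₁ := by
  have hTc : T.Connected := hT.isConnected
  obtain ⟨p1, hp1, hp1S⟩ := aux_walk_in_set h1 hi1 ht1
  obtain ⟨q1, hq1, hq1D⟩ := aux_shortest hTc t1 r
  obtain ⟨p2, hp2, hp2S⟩ := aux_walk_in_set h2 hi2 ht2
  obtain ⟨q2, hq2, hq2D⟩ := aux_shortest hTc t2 r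
  have heqzero : ∀ {x y : ι}, T.dist x y = 0 → x = y := fun h =>
    (hTc.dist_eq_zero_iff.mp h)
  have hP1 : (p1.append q1).IsPath := by
    refine aux_append_path hp1 hq1 ?_
    intro x hxp hxq
    have hx1 : T.dist t1 r ≤ T.dist x r := hmin1 x (hp1S x hxp)
    have hx2 := hq1D x hxq
    exact (heqzero (by omega : T.dist t1 x = 0)).symm
  have hP2 : (p2.append q2).IsPath := by
    refine aux_append_path hp2 hq2 ?_
    intro x hxp hxq
    have hx1 : T.dist t2 r ≤ T.dist x r := hmin2 x (hp2S x hxp)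
    have hx2 := hq2D x hxq
    exact (heqzero (by omega : T.dist t2 x = 0)).symm
  have huniq := SimpleGraph.isAcyclic_iff_path_unique.mp hT.IsAcyclic
    (⟨p1.append q1, hP1⟩ : T.Path i r) ⟨p2.append q2, hP2⟩
  have ht2mem : t2 ∈ (p2.append q2).support := by
    rw [Walk.mem_support_append_iff]
    exact Or.inr q2.start_mem_support
  have ht2mem1 : t2 ∈ (p1.append q1).support := by
    have heq : (p1.append q1).support = (p2.append q2).support := by
      have := congrArg (fun P : T.Path i r => (P : T.Walk i r).support) huniq
      simpa using this
    rw [heq]; exact ht2mem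
  rw [Walk.mem_support_append_iff] at ht2mem1
  rcases ht2mem1 with h | h
  · exact hp1S t2 h
  · have hx2 := hq1D t2 h
    have : t1 = t2 := heqzero (by omega : T.dist t1 t2 = 0)
    exact this ▸ ht1

-- the degree-sum lemma
lemma aux_degsum {V : Type} [Fintype V] [DecidableEq V] (G : SimpleGraph V)
    [DecidableRel G.Adj] (w : ℕ)
    (htw : ∃ (ι : Type) (_ : Fintype ι) (T : SimpleGraph ι) (D : TreeDecomp G T),
      ∀ i : ι, (D.bag i).card ≤ w + 1) :
    ∑ v : V, G.degree v ≤ 2 * (Fintype.card V * w) := by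
  classical
  obtain ⟨ι, _, T, D, hbag⟩ := htw
  have hT := D.isTree
  have hTc : T.Connected := hT.isConnected
  obtain ⟨r⟩ : Nonempty ι := hTc.nonempty
  -- the "top" bag of each vertex
  have htopex : ∀ v : V, ∃ t : ι, v ∈ D.bag t ∧
      ∀ j : ι, v ∈ D.bag j → T.dist t r ≤ T.dist j r := by
    intro v
    obtain ⟨i0, hi0⟩ := D.mem_bag v
    obtain ⟨t, ht, hmin⟩ := Finset.exists_min_image
      (univ.filter (fun i => v ∈ D.bag i)) (fun i => T.dist i r)
      ⟨i0, by simp [hi0]⟩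
    exact ⟨t, by simpa using ht, fun j hj => hmin j (by simp [hj])⟩
  choose top htop hmin using htopex
  -- key orientation lemma
  have hkey : ∀ u v : V, G.Adj u v → T.dist (top u) r ≤ T.dist (top v) r →
      u ∈ D.bag (top v) := by
    intro u v hadj hle
    obtain ⟨i, hiu, hiv⟩ := D.edge_bag u v hadj
    exact aux_key hT r (D.subtree u) (D.subtree v) hiu hiv (htop u) (htop v)
      (fun j hj => hmin u j hj) (fun j hj => hmin v j hj) hle
  -- counting
  set A : Finset (V × V) := univ.filter (fun p : V × V => G.Adj p.1 p.2) with hA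
  set A' : Finset (V × V) :=
    univ.filter (fun p : V × V => G.Adj p.1 p.2 ∧ p.1 ∈ D.bag (top p.2)) with hA'
  have hAcard : A.card = ∑ v : V, G.degree v := by
    rw [Finset.card_eq_sum_card_fiberwise (f := Prod.snd) (t := univ)
      (fun x _ => mem_univ _)]
    refine Finset.sum_congr rfl fun v _ => ?_
    have himg : A.filter (fun p => p.2 = v)
        = (G.neighborFinset v).image (fun u => (u, v)) := by
      ext ⟨a, b⟩
      simp only [hA, Finset.mem_filter, Finset.mem_univ, true_and, Finset.mem_image,
        mem_neighborFinset, Prod.mk.injEq]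
      constructor
      · rintro ⟨hadj, rfl⟩; exact ⟨a, hadj.symm, rfl, rfl⟩
      · rintro ⟨u, hadj, rfl, rfl⟩; exact ⟨hadj.symm, rfl⟩
    rw [himg, Finset.card_image_of_injective _ (fun a b h => (Prod.mk.injEq _ _ _ _ ▸ h).1)]
    rfl
  have hfilter : A.filter (fun p => p.1 ∈ D.bag (top p.2)) = A' := by
    ext p; simp only [hA, hA', Finset.mem_filter, Finset.mem_univ, true_and, and_assoc]
  have hswap : (A.filter (fun p => ¬ p.1 ∈ D.bag (top p.2))).card ≤ A'.card := by
    rw [← Finset.card_image_of_injective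
      (A.filter (fun p => ¬ p.1 ∈ D.bag (top p.2))) Prod.swap_injective]
    apply Finset.card_le_card
    intro q hq
    simp only [Finset.mem_image, Finset.mem_filter, hA, hA', Finset.mem_univ,
      true_and] at hq ⊢
    obtain ⟨p, ⟨hadj, hnmem⟩, rfl⟩ := hq
    refine ⟨hadj.symm, ?_⟩
    simp only [Prod.fst_swap, Prod.snd_swap]
    by_cases h : T.dist (top p.2) r ≤ T.dist (top p.1) r
    · exact hkey p.2 p.1 hadj.symm h
    · exact absurd (hkey p.1 p.2 hadj (le_of_not_ge h)) hnmem
  have hsplit : A.card ≤ 2 * A'.card := by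
    have := Finset.card_filter_add_card_filter_not
      (s := A) (p := fun p : V × V => p.1 ∈ D.bag (top p.2))
    rw [hfilter] at this
    omega
  have hA'card : A'.card ≤ Fintype.card V * w := by
    have hsub : A' ⊆ univ.biUnion
        (fun v : V => ((D.bag (top v)).erase v).image (fun u => (u, v))) := by
      intro p hp
      simp only [hA', Finset.mem_filter, Finset.mem_univ, true_and] at hp
      obtain ⟨hadj, hmem⟩ := hp
      refine Finset.mem_biUnion.mpr ⟨p.2, mem_univ _, ?_⟩
      refine Finset.mem_image.mpr ⟨p.1, Finset.mem_erase.mpr ⟨hadj.ne, hmem⟩, rfl⟩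
    calc A'.card ≤ _ := Finset.card_le_card hsub
      _ ≤ ∑ v : V, (((D.bag (top v)).erase v).image (fun u => (u, v))).card :=
        Finset.card_biUnion_le
      _ ≤ ∑ _v : V, w := by
        refine Finset.sum_le_sum fun v _ => ?_
        calc (((D.bag (top v)).erase v).image (fun u => (u, v))).card
            ≤ ((D.bag (top v)).erase v).card := Finset.card_image_le
          _ = (D.bag (top v)).card - 1 := Finset.card_erase_of_mem (htop v)
          _ ≤ w := by have := hbag (top v); omega
      _ = Fintype.card V * w := by rw [Finset.sum_const, smul_eq_mul, Finset.card_univ]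
  omega

/-- Let `G` be a graph on `n` vertices of tree-width at most `w` (i.e. `G`
admits a tree decomposition all of whose bags have size at most `w + 1`) whose complement
`Gᶜ` is closed under the Bondy–Chvátal closure for Hamiltonian paths (any two distinct
non-adjacent vertices `u, v` of `Gᶜ` satisfy `deg_{Gᶜ}(u) + deg_{Gᶜ}(v) < n`).  Then the
neighborhood diversity of `Gᶜ` is at most `2^k + k` where `k = 2(w² + w)`: there is a
partition of the vertices into at most `2^k + k` classes (given by a coloring `c`) such
that any two vertices `u, v` in the same class satisfy `N(u) \ {v} = N(v) \ {u}` in `Gᶜ`. -/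
theorem stmt0 {V : Type} [Fintype V] [DecidableEq V] (G : SimpleGraph V)
    [DecidableRel G.Adj] (w : ℕ)
    (htw : ∃ (ι : Type) (_ : Fintype ι) (T : SimpleGraph ι) (D : TreeDecomp G T),
      ∀ i : ι, (D.bag i).card ≤ w + 1)
    (hclosed : ∀ u v : V, u ≠ v → ¬ Gᶜ.Adj u v →
      Gᶜ.degree u + Gᶜ.degree v < Fintype.card V) :
    ∃ c : V → Fin (2 ^ (2 * (w ^ 2 + w)) + 2 * (w ^ 2 + w)),
      ∀ u v : V, c u = c v →
        Gᶜ.neighborSet u \ {v} = Gᶜ.neighborSet v \ {u} := by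
  classical
  set n := Fintype.card V with hn
  set k := 2 * (w ^ 2 + w) with hk
  by_cases hsmall : n ≤ 2 ^ k + k
  · -- trivial case: one class per vertex
    obtain ⟨e⟩ : Nonempty (V ↪ Fin (2 ^ k + k)) :=
      Function.Embedding.nonempty_of_card_le (by simpa using hsmall)
    refine ⟨e, fun u v hc => ?_⟩
    have : u = v := e.injective hc
    subst this; rfl
  push_neg at hsmall
  have hdeg := aux_degsum G w htw
  rw [← hn] at hdeg
  set H : Finset V := univ.filter (fun v => n ≤ 2 * G.degree v + 1) with hH
  have hlowhigh : ∀ u v : V, G.Adj u v → u ∉ H → v ∈ H := by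
    intro u v hadj hu
    have hnc : ¬ Gᶜ.Adj u v := fun h => ((SimpleGraph.compl_adj G u v).mp h).2 hadj
    have h1 := hclosed u v hadj.ne hnc
    rw [SimpleGraph.degree_compl, SimpleGraph.degree_compl] at h1
    have h2 := G.degree_lt_card_verts u
    have h3 := G.degree_lt_card_verts v
    simp only [hH, Finset.mem_filter, Finset.mem_univ, true_and] at hu ⊢
    omega
  have hHcard : H.card ≤ k := by
    by_contra hcon
    push_neg at hcon
    have hsum : H.card * n ≤ 2 * (2 * (n * w)) + H.card := by
      calc H.card * n = ∑ _v ∈ H, n := by rw [Finset.sum_const, smul_eq_mul]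
        _ ≤ ∑ v ∈ H, (2 * G.degree v + 1) :=
          Finset.sum_le_sum fun v hv => (Finset.mem_filter.mp hv).2
        _ = 2 * ∑ v ∈ H, G.degree v + H.card := by
          rw [Finset.sum_add_distrib, Finset.sum_const, smul_eq_mul, mul_one,
            Finset.mul_sum]
        _ ≤ 2 * ∑ v : V, G.degree v + H.card := by
          have h5 : (∑ v ∈ H, G.degree v) ≤ ∑ v : V, G.degree v :=
            Finset.sum_le_sum_of_subset (H.subset_univ)
          omega
        _ ≤ 2 * (2 * (n * w)) + H.card := by omega
    have hle : H.card ≤ n := by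
      simpa using Finset.card_le_card (H.subset_univ)
    have hwk : 4 * w ≤ k := by
      have : w ≤ w ^ 2 := by nlinarith
      omega
    have h2pow : 1 ≤ 2 ^ k := Nat.one_le_two_pow
    have hn4 : 4 * w + 2 ≤ n := by omega
    -- contradiction
    have hcon' : 2 * (w ^ 2 + w) + 1 ≤ H.card := hcon
    nlinarith [hsum, hcon', hle, hn4]
  -- build the coloring
  obtain ⟨eh⟩ : Nonempty (↥H ↪ Fin k) := by
    refine Function.Embedding.nonempty_of_card_le ?_
    simpa [Fintype.card_coe] using hHcard
  obtain ⟨el⟩ : Nonempty ((↥H → Bool) ↪ Fin (2 ^ k)) := by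
    refine Function.Embedding.nonempty_of_card_le ?_
    rw [Fintype.card_fun, Fintype.card_fin, Fintype.card_bool, Fintype.card_coe]
    exact Nat.pow_le_pow_right (by norm_num) hHcard
  refine ⟨fun v => if hv : v ∈ H then Fin.natAdd (2 ^ k) (eh ⟨v, hv⟩)
    else Fin.castAdd k (el fun h => decide (G.Adj v ↑h)), fun u v hc => ?_⟩
  by_cases huv : u = v
  · subst huv; rfl
  dsimp only at hc
  split_ifs at hc with hu hv hv
  · -- both high: injective ⇒ u = v, contradiction
    exfalso
    have := congrArg Fin.val hc
    simp only [Fin.natAdd] at this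
    have : eh ⟨u, hu⟩ = eh ⟨v, hv⟩ := Fin.ext (by omega)
    have := eh.injective this
    exact huv (congrArg Subtype.val this)
  · exfalso
    have := congrArg Fin.val hc
    simp only [Fin.natAdd, Fin.castAdd, Fin.castLE] at this
    have hlt := (el fun h : ↥H => decide (G.Adj v ↑h)).isLt
    omega
  · exfalso
    have := congrArg Fin.val hc
    simp only [Fin.natAdd, Fin.castAdd, Fin.castLE] at this
    have hlt := (el fun h : ↥H => decide (G.Adj u ↑h)).isLt
    omega
  · -- both low
    have hsig : (fun h : ↥H => decide (G.Adj u ↑h)) = fun h : ↥H => decide (G.Adj v ↑h) := by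
      apply el.injective
      apply Fin.ext
      have := congrArg Fin.val hc
      simpa [Fin.castAdd, Fin.castLE] using this
    have hadj : ∀ x : V, G.Adj u x ↔ G.Adj v x := by
      intro x
      constructor
      · intro h
        have hxH : x ∈ H := hlowhigh u x h hu
        have h6 := congrFun hsig (⟨x, hxH⟩ : ↥H)
        simp only [decide_eq_decide] at h6
        exact h6.mp h
      · intro h
        have hxH : x ∈ H := hlowhigh v x h hv
        have h6 := congrFun hsig (⟨x, hxH⟩ : ↥H)
        simp only [decide_eq_decide] at h6
        exact h6.mpr h
    ext x
    simp only [Set.mem_diff, SimpleGraph.mem_neighborSet, SimpleGraph.compl_adj,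
      Set.mem_singleton_iff]
    constructor
    · rintro ⟨⟨h1, h2⟩, h3⟩
      exact ⟨⟨fun h => h3 h.symm, fun h => h2 ((hadj x).mpr h)⟩, fun h => h1 h.symm⟩
    · rintro ⟨⟨h1, h2⟩, h3⟩
      exact ⟨⟨fun h => h3 h.symm, fun h => h2 ((hadj x).mp h)⟩, fun h => h1 h.symm⟩
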